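/- Let E and B be pointed CW complexes with basepoints e₀ and b₀, and let p : E → B be a pointed continuous map. Let F = P_p = {(e,ω) ∈ E × PB : ω(0) = p(e)} be the mapping path space of p, let f : P_p → E be the projection (e,ω) ↦ e, and let ∂ : ΩB → P_p be the connecting map ω ↦ (e₀, ω). If p has a left homotopy inverse, i.e. there is a pointed continuous map s : B → E with s∘p pointed-homotopic to the identity of E, then ∂ has a right homotopy inverse, i.e. there is a continuous map t : P_p → ΩB with ∂∘t homotopic to the identity of P_p. -/

import Mathlib

open Set

universe u v

noncomputable section

/-! ### Abstract simplicial complexes -/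

/-- `K` is an abstract simplicial complex (a collection of subsets containing `∅`
and closed under taking subsets). -/
def IsComplex {ι : Type*} (K : Set (Set ι)) : Prop :=
  ∅ ∈ K ∧ ∀ σ ∈ K, ∀ τ ⊆ σ, τ ∈ K

/-- `ω` is a missing face of `K`: not a face, but all proper subsets are faces. -/
def IsMissingFace {ι : Type*} (K : Set (Set ι)) (ω : Set ι) : Prop :=
  ω ∉ K ∧ ∀ τ ⊂ ω, τ ∈ K

/-- `K` is flag: every missing face has at most two elements. -/
def IsFlag {ι : Type*} (K : Set (Set ι)) : Prop :=
  ∀ ω, IsMissingFace K ω → ω.encard ≤ 2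

/-- The flagification of `K`: faces are the subsets all of whose
subsets with at most two elements belong to `K`. -/
def flagification {ι : Type*} (K : Set (Set ι)) : Set (Set ι) :=
  {σ | ∀ τ ⊆ σ, τ.encard ≤ 2 → τ ∈ K}

theorem subset_flagification {ι : Type*} {K : Set (Set ι)} (hK : IsComplex K) :
    K ⊆ flagification K := fun σ hσ τ hτ _ => hK.2 σ hσ τ hτ

/-- The star of a vertex. -/
def starOf {ι : Type*} (K : Set (Set ι)) (v : ι) : Set (Set ι) :=
  {τ | τ ∈ K ∧ insert v τ ∈ K}

/-- The deletion of a vertex. -/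
def delOf {ι : Type*} (K : Set (Set ι)) (v : ι) : Set (Set ι) :=
  {τ | τ ∈ K ∧ v ∉ τ}

/-- The link of a vertex. -/
def linkOf {ι : Type*} (K : Set (Set ι)) (v : ι) : Set (Set ι) :=
  starOf K v ∩ delOf K v

/-- The full subcomplex on a subset `ω` of the index set. -/
def fullSub {ι : Type*} (K : Set (Set ι)) (ω : Set ι) : Set (Set ι) :=
  {σ | σ ∈ K ∧ σ ⊆ ω}

/-- The vertex set of a complex. -/
def vertices {ι : Type*} (K : Set (Set ι)) : Set ι := {i | {i} ∈ K}

/-- The complex consisting of disjoint points: faces are `∅` and the singletons. -/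
def discreteComplex (ι : Type*) : Set (Set ι) := {σ | σ.Subsingleton}

theorem discreteComplex_subset {ι : Type*} {K : Set (Set ι)} (h0 : ∅ ∈ K)
    (hv : ∀ i : ι, ({i} : Set ι) ∈ K) : discreteComplex ι ⊆ K := by
  intro σ hσ
  rcases hσ.eq_empty_or_singleton with h | ⟨i, h⟩ <;> subst h
  · exact h0
  · exact hv _

theorem delOf_mono {ι : Type*} {K K' : Set (Set ι)} (h : K ⊆ K') (v : ι) :
    delOf K v ⊆ delOf K' v := fun τ hτ => ⟨h hτ.1, hτ.2⟩

theorem linkOf_mono {ι : Type*} {K K' : Set (Set ι)} (h : K ⊆ K') (v : ι) :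
    linkOf K v ⊆ linkOf K' v := fun τ hτ =>
  ⟨⟨h hτ.1.1, h hτ.1.2⟩, h hτ.2.1, hτ.2.2⟩

theorem vertices_linkOf_ne {ι : Type*} (K : Set (Set ι)) (v : ι) {i : ι}
    (h : i ∈ vertices (linkOf K v)) : i ≠ v := by
  rintro rfl
  exact h.2.2 (Set.mem_singleton _)


theorem linkOf_subset_delOf {ι : Type*} (K : Set (Set ι)) (v : ι) :
    linkOf K v ⊆ delOf K v := Set.inter_subset_right

theorem empty_mem_delOf {ι : Type*} {K : Set (Set ι)} {v : ι} (h0 : ∅ ∈ K) :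
    ∅ ∈ delOf K v := ⟨h0, Set.notMem_empty v⟩

theorem empty_mem_linkOf {ι : Type*} {K : Set (Set ι)} {v : ι} (h0 : ∅ ∈ K)
    (hv : ({v} : Set ι) ∈ K) : ∅ ∈ linkOf K v :=
  ⟨⟨h0, by simpa using hv⟩, h0, Set.notMem_empty v⟩

/-! ### Polyhedral products -/

/-- The polyhedral product of the pairs `(X i, A i)`, over the full index type. -/
def polyProd {ι : Type*} (X : ι → Type u) [∀ i, TopologicalSpace (X i)]
    (A : ∀ i, Set (X i)) (K : Set (Set ι)) : Set (∀ i, X i) :=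
  {x | ∃ σ ∈ K, ∀ i, i ∉ σ → x i ∈ A i}

/-- The polyhedral product of the pairs `(X i, A i)`, over the index set `S`. -/
def polyProdOn {ι : Type*} (X : ι → Type u) [∀ i, TopologicalSpace (X i)]
    (A : ∀ i, Set (X i)) (S : Set ι) (K : Set (Set ι)) : Set (∀ i : S, X i) :=
  {x | ∃ σ ∈ K, ∀ i : S, ↑i ∉ σ → x i ∈ A i}

theorem polyProd_mono {ι : Type*} (X : ι → Type u) [∀ i, TopologicalSpace (X i)]
    (A : ∀ i, Set (X i)) {K K' : Set (Set ι)} (h : K ⊆ K') :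
    polyProd X A K ⊆ polyProd X A K' := fun _ ⟨σ, hσ, hx⟩ => ⟨σ, h hσ, hx⟩

theorem polyProdOn_mono {ι : Type*} (X : ι → Type u) [∀ i, TopologicalSpace (X i)]
    (A : ∀ i, Set (X i)) (S : Set ι) {K K' : Set (Set ι)} (h : K ⊆ K') :
    polyProdOn X A S K ⊆ polyProdOn X A S K' := fun _ ⟨σ, hσ, hx⟩ => ⟨σ, h hσ, hx⟩

/-- The subspace inclusion of polyhedral products induced by an inclusion of
simplicial complexes. -/
def polyIncl {ι : Type*} (X : ι → Type u) [∀ i, TopologicalSpace (X i)]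
    (A : ∀ i, Set (X i)) {K K' : Set (Set ι)} (h : K ⊆ K') :
    C(↥(polyProd X A K), ↥(polyProd X A K')) :=
  ⟨Set.inclusion (polyProd_mono X A h), continuous_inclusion _⟩

/-- The subspace inclusion of polyhedral products over the index set `S` induced by an
inclusion of simplicial complexes. -/
def polyInclOn {ι : Type*} (X : ι → Type u) [∀ i, TopologicalSpace (X i)]
    (A : ∀ i, Set (X i)) (S : Set ι) {K K' : Set (Set ι)} (h : K ⊆ K') :
    C(↥(polyProdOn X A S K), ↥(polyProdOn X A S K')) :=
  ⟨Set.inclusion (polyProdOn_mono X A S h), continuous_inclusion _⟩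

/-- The basepoint of a polyhedral product. -/
def polyBase {ι : Type*} (X : ι → Type u) [∀ i, TopologicalSpace (X i)]
    (A : ∀ i, Set (X i)) (K : Set (Set ι)) (h0 : ∅ ∈ K)
    (pt : ∀ i, X i) (hpt : ∀ i, pt i ∈ A i) : ↥(polyProd X A K) :=
  ⟨pt, ∅, h0, fun i _ => hpt i⟩

/-- The basepoint of a polyhedral product over the index set `S`. -/
def polyBaseOn {ι : Type*} (X : ι → Type u) [∀ i, TopologicalSpace (X i)]
    (A : ∀ i, Set (X i)) (S : Set ι) (K : Set (Set ι)) (h0 : ∅ ∈ K)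
    (pt : ∀ i, X i) (hpt : ∀ i, pt i ∈ A i) : ↥(polyProdOn X A S K) :=
  ⟨fun i => pt i, ∅, h0, fun i _ => hpt i⟩

/-! ### Loop spaces, path spaces and mapping path spaces -/

/-- The loop space of `Z` at `z₀`, with the compact-open topology. -/
abbrev Loops (Z : Type u) [TopologicalSpace Z] (z₀ : Z) :=
  {ω : C(unitInterval, Z) // ω 0 = z₀ ∧ ω 1 = z₀}

/-- The constant loop. -/
def constLoop (Z : Type u) [TopologicalSpace Z] (z₀ : Z) : Loops Z z₀ :=
  ⟨ContinuousMap.const _ z₀, rfl, rfl⟩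

/-- The map of loop spaces induced by a pointed continuous map. -/
def loopMap {Y Z : Type u} [TopologicalSpace Y] [TopologicalSpace Z] {y₀ : Y} {z₀ : Z}
    (f : C(Y, Z)) (hf : f y₀ = z₀) : C(Loops Y y₀, Loops Z z₀) :=
  ⟨fun ω => ⟨f.comp ω.1, by simp [ω.2.1, hf], by simp [ω.2.2, hf]⟩,
    ((ContinuousMap.continuous_postcomp f).comp continuous_subtype_val).subtype_mk _⟩

/-- The path space `PZ` of paths ending at the basepoint. -/
abbrev PathSpc (Z : Type u) [TopologicalSpace Z] (z₀ : Z) :=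
  {ω : C(unitInterval, Z) // ω 1 = z₀}

/-- The mapping path space `P_g` of a pointed map `g`. -/
abbrev MapPath {Y Z : Type u} [TopologicalSpace Y] [TopologicalSpace Z]
    (g : C(Y, Z)) (z₀ : Z) :=
  {p : Y × C(unitInterval, Z) // p.2 0 = g p.1 ∧ p.2 1 = z₀}

/-- The basepoint of a mapping path space. -/
def mapPathBase {Y Z : Type u} [TopologicalSpace Y] [TopologicalSpace Z]
    (g : C(Y, Z)) {y₀ : Y} {z₀ : Z} (h : g y₀ = z₀) : MapPath g z₀ :=
  ⟨(y₀, ContinuousMap.const _ z₀), by simp [h], rfl⟩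

/-- Projection of the mapping path space to the source. -/
def mapPathProj {Y Z : Type u} [TopologicalSpace Y] [TopologicalSpace Z]
    (g : C(Y, Z)) (z₀ : Z) : C(MapPath g z₀, Y) :=
  ⟨fun p => p.1.1, (continuous_fst.comp continuous_subtype_val)⟩

/-- The fibre inclusion (connecting map) `ΩZ → P_g`. -/
def loopToMapPath {Y Z : Type u} [TopologicalSpace Y] [TopologicalSpace Z]
    (g : C(Y, Z)) {y₀ : Y} {z₀ : Z} (h : g y₀ = z₀) :
    C(Loops Z z₀, MapPath g z₀) :=
  ⟨fun ω => ⟨(y₀, ω.1), by simp [ω.2.1, h], ω.2.2⟩,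
    ((continuous_const.prodMk continuous_subtype_val)).subtype_mk _⟩

/-- Functoriality of mapping path spaces: a commutative square of pointed maps
induces a map of mapping path spaces. -/
def mapPathMap {Y Z Y' Z' : Type u} [TopologicalSpace Y] [TopologicalSpace Z]
    [TopologicalSpace Y'] [TopologicalSpace Z'] {g : C(Y, Z)} {g' : C(Y', Z')}
    (a : C(Y, Y')) (b : C(Z, Z')) {z₀ : Z} {z₀' : Z'} (hz : b z₀ = z₀')
    (hcomm : ∀ y, g' (a y) = b (g y)) : C(MapPath g z₀, MapPath g' z₀') :=
  ⟨fun p => ⟨(a p.1.1, b.comp p.1.2), by simp [hcomm, p.2.1], by simp [p.2.2, hz]⟩,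
    ((a.continuous.comp (continuous_fst.comp continuous_subtype_val)).prodMk
      ((ContinuousMap.continuous_postcomp b).comp
        (continuous_snd.comp continuous_subtype_val))).subtype_mk _⟩

/-- The induced map of path spaces. -/
def pathSpcMap {Y Z : Type u} [TopologicalSpace Y] [TopologicalSpace Z] {y₀ : Y} {z₀ : Z}
    (f : C(Y, Z)) (hf : f y₀ = z₀) : C(PathSpc Y y₀, PathSpc Z z₀) :=
  ⟨fun ω => ⟨f.comp ω.1, by rw [ContinuousMap.comp_apply, ω.2, hf]⟩,
    Continuous.subtype_mk ((ContinuousMap.continuous_postcomp f).comp continuous_subtype_val)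
      (fun ω => by simp only [Function.comp_apply, ContinuousMap.comp_apply, ω.2, hf])⟩

/-! ### Spaces of paths starting in a subspace -/

/-- For a subset `W` of (a subspace of) `Z`, the space of pairs `(y, ω)` with `y ∈ W`
and `ω` a path in `Z` starting at `y`. -/
def Ptil {Z : Type u} [TopologicalSpace Z] (W : Set Z) : Set (Z × C(unitInterval, Z)) :=
  {p | p.1 ∈ W ∧ p.2 0 = p.1}

/-- For a subset `W` of (a subspace of) `Z`, the space of pairs `(y, ω)` with `y ∈ W`
and `ω` a path in `Z` from `y` to the basepoint. -/
def Pms {Z : Type u} [TopologicalSpace Z] (z₀ : Z) (W : Set Z) : Set (Z × C(unitInterval, Z)) :=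
  {p | p.1 ∈ W ∧ p.2 0 = p.1 ∧ p.2 1 = z₀}

/-- The canonical map `P_{g × h} → P_g × P_h`. -/
def splitMapPath {Y Z M N : Type u} [TopologicalSpace Y] [TopologicalSpace Z]
    [TopologicalSpace M] [TopologicalSpace N] (g : C(Y, Z)) (h : C(M, N)) (z₀ : Z) (n₀ : N) :
    MapPath (g.prodMap h) (z₀, n₀) → MapPath g z₀ × MapPath h n₀ := fun p =>
  (⟨(p.1.1.1, ContinuousMap.fst.comp p.1.2), by simp [p.2.1], by simp [p.2.2]⟩,
   ⟨(p.1.1.2, ContinuousMap.snd.comp p.1.2), by simp [p.2.1], by simp [p.2.2]⟩)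

/-- The map `ψ : P_{id_Y} → PY`. -/
def psiIdPath {Y : Type u} [TopologicalSpace Y] (y₀ : Y) :
    MapPath (ContinuousMap.id Y) y₀ → PathSpc Y y₀ := fun p => ⟨p.1.2, p.2.2⟩

/-- The map `φ : PY → P_{id_Y}`. -/
def phiIdPath {Y : Type u} [TopologicalSpace Y] (y₀ : Y) :
    PathSpc Y y₀ → MapPath (ContinuousMap.id Y) y₀ := fun ω => ⟨(ω.1 0, ω.1), rfl, ω.2⟩

/-! ### Joins and cones -/

/-- The defining relations of the (reduced) join. -/
inductive JoinRel {Y Z : Type u} (y₀ : Y) (z₀ : Z) :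
    Y × unitInterval × Z → Y × unitInterval × Z → Prop
  | left (y : Y) (z z' : Z) : JoinRel y₀ z₀ (y, 0, z) (y, 0, z')
  | right (y y' : Y) (z : Z) : JoinRel y₀ z₀ (y, 1, z) (y', 1, z)
  | base (t : unitInterval) : JoinRel y₀ z₀ (y₀, t, z₀) (y₀, 0, z₀)

/-- The (reduced) join of two pointed spaces, with the quotient topology. -/
abbrev Join (Y Z : Type u) [TopologicalSpace Y] [TopologicalSpace Z] (y₀ : Y) (z₀ : Z) :=
  Quot (JoinRel y₀ z₀)

/-- The basepoint of the join. -/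
def joinBase (Y Z : Type u) [TopologicalSpace Y] [TopologicalSpace Z] (y₀ : Y) (z₀ : Z) :
    Join Y Z y₀ z₀ :=
  Quot.mk _ (y₀, 0, z₀)

/-- The defining relations of the (reduced) cone: the subset `Y×{0} ∪ {y₀}×I` is
collapsed to a point. -/
inductive ConeRel (Y : Type u) (y₀ : Y) : Y × unitInterval → Y × unitInterval → Prop
  | mk (p q : Y × unitInterval) (hp : p.2 = 0 ∨ p.1 = y₀) (hq : q.2 = 0 ∨ q.1 = y₀) :
      ConeRel Y y₀ p q

/-- The (reduced) cone on a pointed space, with the quotient topology. -/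
abbrev Cone (Y : Type u) [TopologicalSpace Y] (y₀ : Y) := Quot (ConeRel Y y₀)

/-- The basepoint (the collapsed class) of the cone. -/
def coneBase (Y : Type u) [TopologicalSpace Y] (y₀ : Y) : Cone Y y₀ :=
  Quot.mk _ (y₀, 0)

/-- The inclusion of `Y` in the cone as `Y × {1}`. -/
def coneIncl (Y : Type u) [TopologicalSpace Y] (y₀ : Y) : C(Y, Cone Y y₀) :=
  ⟨fun y => Quot.mk _ (y, 1),
    (continuous_quot_mk.comp (continuous_id.prodMk continuous_const))⟩

/-! ### CW complexes -/

section OldCWComplex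

open CategoryTheory CategoryTheory.Limits

namespace RelativeCWComplex

/-- The `n`-sphere (in `ℝⁿ⁺¹`), as in the older Mathlib. -/
def sphere (n : ℤ) : TopCat.{u} :=
  TopCat.of <| ULift <| Metric.sphere (0 : EuclideanSpace ℝ <| Fin <| Int.toNat <| n + 1) 1

/-- The `n`-dimensional closed disk, as in the older Mathlib. -/
def disk (n : ℤ) : TopCat.{u} :=
  TopCat.of <| ULift <| Metric.closedBall (0 : EuclideanSpace ℝ <| Fin <| Int.toNat n) 1

/-- The inclusion of the `n`-sphere in the `(n+1)`-disk. -/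
def sphereInclusion (n : ℤ) : sphere.{u} n ⟶ disk.{u} (n + 1) :=
  TopCat.ofHom ⟨fun x => ⟨⟨x.down.1, le_of_eq x.down.2⟩⟩,
    continuous_uliftUp.comp
      ((continuous_subtype_val.comp continuous_uliftDown).subtype_mk _)⟩

/-- Disjoint union of sphere inclusions. -/
def sigmaSphereInclusion (n : ℤ) (cells : Type u) :
    (∐ fun (_ : cells) => sphere.{u} n) ⟶ (∐ fun (_ : cells) => disk.{u} (n + 1)) :=
  Limits.Sigma.map fun _ => sphereInclusion n

/-- The combined attaching map. -/
def sigmaAttachMap (X : TopCat.{u}) (n : ℤ) (cells : Type u)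
    (attach_maps : cells → (sphere.{u} n ⟶ X)) : (∐ fun (_ : cells) => sphere.{u} n) ⟶ X :=
  Limits.Sigma.desc attach_maps

/-- `X'` is obtained from `X` by attaching `(n + 1)`-disks. -/
structure AttachCells (X X' : TopCat.{u}) (n : ℤ) where
  cells : Type u
  attach_maps : cells → (sphere.{u} n ⟶ X)
  iso_pushout : X' ≅ pushout (sigmaSphereInclusion n cells) (sigmaAttachMap X n cells attach_maps)

end RelativeCWComplex

/-- A relative CW complex (the older Mathlib notion). -/
structure RelativeCWComplex where
  sk : ℕ → TopCat.{u}
  attachCells (n : ℕ) : RelativeCWComplex.AttachCells (sk n) (sk (n + 1)) (n - 1)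

/-- A CW complex (the older Mathlib notion). -/
structure CWComplex extends RelativeCWComplex.{u} where
  isEmpty_sk_zero : IsEmpty (sk 0)

namespace RelativeCWComplex

/-- Inclusion `X ⟶ X'` for an attaching of cells. -/
def AttachCells.inclusion (X X' : TopCat.{u}) (n : ℤ) (att : AttachCells X X' n) : X ⟶ X' :=
  pushout.inr _ _ ≫ (att.iso_pushout).inv

/-- Skeleton inclusion. -/
def skInclusion (X : RelativeCWComplex.{u}) (n : ℕ) : X.sk n ⟶ X.sk (n + 1) :=
  AttachCells.inclusion (X.sk n) (X.sk (n + 1)) (n - 1) (X.attachCells n)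

/-- The underlying space of a relative CW complex. -/
def toTopCat (X : RelativeCWComplex.{u}) : TopCat.{u} :=
  colimit (Functor.ofSequence X.skInclusion)

end RelativeCWComplex

end OldCWComplex

/-- `X` is homeomorphic to (the geometric realization of) a CW complex. -/
def IsCW (X : Type u) [TopologicalSpace X] : Prop :=
  ∃ C : CWComplex.{u},
    Nonempty (X ≃ₜ ↥(RelativeCWComplex.toTopCat C.toRelativeCWComplex))

open CategoryTheory in
/-- `(X, A)` is (homeomorphic to) a CW pair: `A` is a CW complex and `X` is obtained
from `A` by attaching cells, i.e. `(X, A)` is a relative CW complex. -/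
def IsCWPair (X : Type u) [TopologicalSpace X] (A : Set X) : Prop :=
  IsCW (↥A) ∧
  ∃ (R : RelativeCWComplex.{u}) (e : X ≃ₜ ↥(RelativeCWComplex.toTopCat R)),
    (e '' A) =
      Set.range ⇑(Limits.colimit.ι (Functor.ofSequence R.skInclusion) 0)

/-! ### Graphs -/

/-- The 1-skeleton of a simplicial complex, as a simple graph. -/
def oneSkeleton {ι : Type*} (K : Set (Set ι)) : SimpleGraph ι where
  Adj i j := i ≠ j ∧ ({i, j} : Set ι) ∈ K
  symm := by
    constructor
    rintro i j ⟨hne, h⟩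
    exact ⟨hne.symm, by rwa [Set.pair_comm]⟩
  loopless := by constructor; rintro i ⟨hne, -⟩; exact hne rfl

/-- A simple graph is chordal iff it has no induced cycles of length at least 4. -/
def Chordal {V : Type*} (G : SimpleGraph V) : Prop :=
  ∀ n, 4 ≤ n → IsEmpty (SimpleGraph.cycleGraph n ↪g G)

section aux10

variable {E B : Type u} [TopologicalSpace E] [TopologicalSpace B]
  {e₀ : E} {b₀ : B} (p : C(E, B)) (s : C(B, E))
  (H : ContinuousMap.HomotopyRel (s.comp p) (ContinuousMap.id E) {e₀})

/-- clamp a real number into the unit interval -/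
def pj (r : ℝ) : unitInterval := Set.projIcc 0 1 zero_le_one r

lemma continuous_pj : Continuous pj := by unfold pj; exact continuous_projIcc

@[simp] lemma pj_zero : pj 0 = 0 := Set.projIcc_left _
@[simp] lemma pj_one : pj 1 = 1 := Set.projIcc_right _
lemma pj_coe (x : unitInterval) : pj (x : ℝ) = x := Set.projIcc_val zero_le_one x

/-- the nullhomotopy path: from `e` through `s (p e)` along `s∘ω` down to `e₀`. -/
def gma (q : MapPath p b₀) (τ : ℝ) : E :=
  if τ ≤ 1 / 2 then H (pj (1 - 2 * τ), q.1.1)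
  else s (q.1.2 (pj (2 * τ - 1)))

lemma continuous_gma :
    Continuous fun z : MapPath p b₀ × ℝ => gma p s H z.1 z.2 := by
  unfold gma
  apply Continuous.if_le
  · exact H.continuous.comp ((continuous_pj.comp (by fun_prop)).prodMk
      (by fun_prop))
  · exact s.continuous.comp ((Continuous.eval (by fun_prop :
      Continuous fun z : MapPath p b₀ × ℝ => (z.1 : E × C(unitInterval,B)).2)
      (continuous_pj.comp (by fun_prop))))
  · exact continuous_snd
  · exact continuous_const
  · rintro ⟨q, τ⟩ (h : τ = 1/2)
    subst h
    norm_num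
    rw [q.2.1]

@[simp] lemma gma_zero (q : MapPath p b₀) : gma p s H q 0 = q.1.1 := by
  rw [gma]
  norm_num

lemma gma_one (hs : s b₀ = e₀) (q : MapPath p b₀) : gma p s H q 1 = e₀ := by
  rw [gma]
  norm_num
  rw [q.2.2, hs]



/-- the canonical loop associated to a point of the mapping path space -/
def tht (q : MapPath p b₀) (r : ℝ) : B :=
  if r ≤ 1 / 2 then p (gma p s H q (1 - 2 * r)) else q.1.2 (pj (2 * r - 1))

lemma continuous_tht :
    Continuous fun z : MapPath p b₀ × ℝ => tht p s H z.1 z.2 := by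
  unfold tht
  apply Continuous.if_le
  · exact p.continuous.comp ((continuous_gma p s H).comp
      (continuous_fst.prodMk (by fun_prop)))
  · exact Continuous.eval (by fun_prop :
      Continuous fun z : MapPath p b₀ × ℝ => (z.1 : E × C(unitInterval,B)).2)
      (continuous_pj.comp (by fun_prop))
  · exact continuous_snd
  · exact continuous_const
  · rintro ⟨q, r⟩ (h : r = 1/2)
    subst h
    norm_num
    rw [q.2.1]

lemma tht_zero (hs : s b₀ = e₀) (hp : p e₀ = b₀) (q : MapPath p b₀) :
    tht p s H q 0 = b₀ := by
  rw [tht]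
  norm_num
  rw [gma_one p s H hs, hp]

lemma tht_one (q : MapPath p b₀) : tht p s H q 1 = b₀ := by
  rw [tht]
  norm_num
  rw [q.2.2]

/-- reparametrisation schedule for the deformation of `P_p` into the fibre -/
def rho (w x : ℝ) : ℝ :=
  if w ≤ 1 / 2 then max x (1 / 2 + (1 - 2 * w) * (x - 1 / 2))
  else (max 0 (2 * x - 1) * (2 - 2 * w) + (2 * w - 1) * x + 1) / 2

lemma continuous_rho : Continuous fun z : ℝ × ℝ => rho z.1 z.2 := by
  unfold rho
  apply Continuous.if_le (by fun_prop) (by fun_prop) continuous_fst continuous_const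
  rintro ⟨w, x⟩ (h : w = 1/2)
  subst h
  rcases le_total x (1/2) with h | h
  · rw [max_eq_right (by linarith), max_eq_left (by linarith)]
    ring
  · rw [max_eq_left (by linarith), max_eq_right (by linarith)]
    ring

lemma rho_zero_left (x : ℝ) : rho 0 x = x := by
  rw [rho]
  norm_num

lemma rho_one_left (x : ℝ) : rho 1 x = (x + 1) / 2 := by
  rw [rho]
  norm_num

lemma rho_zero_right {w : ℝ} (hw0 : 0 ≤ w) :
    rho w 0 = if w ≤ 1/2 then w else 1/2 := by
  rw [rho]
  split_ifs with h
  · rw [show (1/2 : ℝ) + (1 - 2*w) * (0 - 1/2) = w by ring, max_eq_right hw0]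
  · rw [max_eq_left (by linarith)]
    ring

lemma rho_one_right {w : ℝ} (hw0 : 0 ≤ w) : rho w 1 = 1 := by
  rw [rho]
  split_ifs with h
  · rw [show (1/2 : ℝ) + (1 - 2*w) * (1 - 1/2) = 1 - w by ring,
      max_eq_left (by linarith)]
  · rw [max_eq_right (by linarith)]
    ring


lemma tht_rho_zero {w : ℝ} (hw0 : 0 ≤ w) (q : MapPath p b₀) :
    tht p s H q (rho w 0) = p (gma p s H q (max 0 (1 - 2 * w))) := by
  rw [rho_zero_right hw0]
  split_ifs with h
  · rw [max_eq_right (by linarith : (0:ℝ) ≤ 1 - 2 * w), tht, if_pos h]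
  · rw [max_eq_left (by linarith : (1:ℝ) - 2 * w ≤ 0), tht,
      if_pos (by norm_num : (1:ℝ)/2 ≤ 1/2)]
    norm_num

lemma tht_rho_one {w : ℝ} (hw0 : 0 ≤ w) (q : MapPath p b₀) :
    tht p s H q (rho w 1) = b₀ := by
  rw [rho_one_right hw0]
  exact tht_one p s H q

lemma tht_half_shift (q : MapPath p b₀) (x : unitInterval) :
    tht p s H q (((x : ℝ) + 1) / 2) = q.1.2 x := by
  rw [tht]
  split_ifs with h
  · have hx : (x : ℝ) = 0 := le_antisymm (by linarith) x.2.1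
    rw [show (1 : ℝ) - 2 * (((x : ℝ) + 1) / 2) = 0 by rw [hx]; ring, gma_zero,
      show x = 0 from Subtype.ext hx]
    exact q.2.1.symm
  · rw [show (2 : ℝ) * (((x : ℝ) + 1) / 2) - 1 = (x : ℝ) by ring, pj_coe]

theorem aux_statement_10 {E B : Type u} [TopologicalSpace E] [TopologicalSpace B]
    (e₀ : E) (b₀ : B)
    (p : C(E, B)) (hp : p e₀ = b₀)
    (hleft : ∃ s : C(B, E), s b₀ = e₀ ∧
      (s.comp p).HomotopicRel (ContinuousMap.id E) {e₀}) :
    ∃ t : C(MapPath p b₀, Loops B b₀),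
      ((loopToMapPath (y₀ := e₀) p hp).comp t).Homotopic (ContinuousMap.id _) := by
  classical
  obtain ⟨s, hs, ⟨H⟩⟩ := hleft
  let Ψ : C(MapPath p b₀ × unitInterval, B) :=
    ⟨fun z => tht p s H z.1 z.2,
      (continuous_tht p s H).comp (continuous_fst.prodMk (by fun_prop))⟩
  have h0 : ∀ q : MapPath p b₀, Ψ.curry q 0 = b₀ := fun q =>
    tht_zero p s H hs hp q
  have h1 : ∀ q : MapPath p b₀, Ψ.curry q 1 = b₀ := fun q => tht_one p s H q
  refine ⟨⟨fun q => ⟨Ψ.curry q, h0 q, h1 q⟩, (Ψ.curry.continuous).subtype_mk _⟩, ?_⟩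
  let Ψ₂ : C((unitInterval × MapPath p b₀) × unitInterval, B) :=
    ⟨fun y => tht p s H y.1.2 (rho y.1.1 y.2),
      (continuous_tht p s H).comp ((continuous_snd.comp continuous_fst).prodMk
        (continuous_rho.comp
          ((continuous_subtype_val.comp (continuous_fst.comp continuous_fst)).prodMk
            (continuous_subtype_val.comp continuous_snd))))⟩
  have mem1 : ∀ z : unitInterval × MapPath p b₀,
      Ψ₂.curry z 0 = p (gma p s H z.2 (max 0 (1 - 2 * (z.1 : ℝ)))) := fun z =>
    tht_rho_zero p s H z.1.2.1 z.2
  have mem2 : ∀ z : unitInterval × MapPath p b₀, Ψ₂.curry z 1 = b₀ := fun z =>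
    tht_rho_one p s H z.1.2.1 z.2
  refine ⟨⟨⟨fun z => ⟨(gma p s H z.2 (max 0 (1 - 2 * (z.1 : ℝ))), Ψ₂.curry z),
      mem1 z, mem2 z⟩,
      (((continuous_gma p s H).comp (continuous_snd.prodMk (by fun_prop))).prodMk
        Ψ₂.curry.continuous).subtype_mk _⟩, ?_, ?_⟩⟩
  · intro q
    apply Subtype.ext
    apply Prod.ext
    · show gma p s H q (max 0 (1 - 2 * ((0 : unitInterval) : ℝ))) = e₀
      rw [show ((0 : unitInterval) : ℝ) = 0 from rfl,
        show max (0:ℝ) (1 - 2 * 0) = 1 by norm_num]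
      exact gma_one p s H hs q
    · ext x
      show tht p s H q (rho ((0 : unitInterval) : ℝ) x) = tht p s H q x
      rw [show ((0 : unitInterval) : ℝ) = 0 from rfl, rho_zero_left]
  · intro q
    apply Subtype.ext
    apply Prod.ext
    · show gma p s H q (max 0 (1 - 2 * ((1 : unitInterval) : ℝ))) = q.1.1
      rw [show ((1 : unitInterval) : ℝ) = 1 from rfl,
        show max (0:ℝ) (1 - 2 * 1) = 0 by norm_num]
      exact gma_zero p s H q
    · ext x
      show tht p s H q (rho ((1 : unitInterval) : ℝ) x) = q.1.2 x
      rw [show ((1 : unitInterval) : ℝ) = 1 from rfl, rho_one_left]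
      exact tht_half_shift p s H q x

end aux10

/-- If a pointed map `p : E → B` of pointed CW complexes has a left
homotopy inverse, then the connecting map `∂ : ΩB → P_p` has a right homotopy
inverse. -/
theorem statement_10 {E B : Type u} [TopologicalSpace E] [TopologicalSpace B]
    (e₀ : E) (b₀ : B) (hE : IsCW E) (hB : IsCW B)
    (p : C(E, B)) (hp : p e₀ = b₀)
    (hleft : ∃ s : C(B, E), s b₀ = e₀ ∧
      (s.comp p).HomotopicRel (ContinuousMap.id E) {e₀}) :
    ∃ t : C(MapPath p b₀, Loops B b₀),
      ((loopToMapPath (y₀ := e₀) p hp).comp t).Homotopic (ContinuousMap.id _) :=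
  aux_statement_10 e₀ b₀ p hp hleft

end
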